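/- arXiv:2409.19885 — 3 statements merged into one kernel-verified Lean document; each statement's English description precedes it below -/
import Mathlib

section
/- Let $N\geq 1$, $\alpha\in(0,N)$, and $p,q>0$. There exist real numbers $\theta_1,\theta_2>1$ with $\frac{N-2}{2N}<\frac{1}{\theta_1 p}<\frac12$, $\frac{N-2}{2N}<\frac{1}{\theta_2 q}<\frac12$ and $\frac{1}{\theta_1}+\frac{1}{\theta_2}=\frac{N+\alpha}{N}$ if and only if $\frac{N-2}{2N}<\frac1p,\frac1q<\frac{N}{2\alpha}$ and $\frac{N-2}{2(N+\alpha)}<\frac{1}{p+q}<\frac{N}{2(N+\alpha)}$ (with the conventions that $\frac{N-2}{2N}=0$ when $N\leq 2$). -/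
set_option maxHeartbeats 1600000 in
/-- Existence of Hölder/HLS auxiliary exponents `θ1, θ2` is equivalent to the
arithmetic condition (H2) on `p, q`.  The convention `(N-2)/(2N) = 0` for `N ≤ 2`
is implemented via `max _ 0`. -/
theorem stmt_0 (N : ℕ) (hN : 1 ≤ N) (α p q : ℝ) (h0 : 0 < α) (hα : α < N)
    (hp : 0 < p) (hq : 0 < q) :
    (∃ θ1 θ2 : ℝ, 1 < θ1 ∧ 1 < θ2 ∧
      max (((N : ℝ) - 2) / (2 * N)) 0 < 1 / (θ1 * p) ∧ 1 / (θ1 * p) < 1 / 2 ∧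
      max (((N : ℝ) - 2) / (2 * N)) 0 < 1 / (θ2 * q) ∧ 1 / (θ2 * q) < 1 / 2 ∧
      1 / θ1 + 1 / θ2 = ((N : ℝ) + α) / N) ↔
    (max (((N : ℝ) - 2) / (2 * N)) 0 < 1 / p ∧ 1 / p < (N : ℝ) / (2 * α) ∧
     max (((N : ℝ) - 2) / (2 * N)) 0 < 1 / q ∧ 1 / q < (N : ℝ) / (2 * α) ∧
     max (((N : ℝ) - 2) / (2 * ((N : ℝ) + α))) 0 < 1 / (p + q) ∧
     1 / (p + q) < (N : ℝ) / (2 * ((N : ℝ) + α))) := by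
  have hN0 : (0:ℝ) < N := by
    have : (1:ℝ) ≤ N := by exact_mod_cast hN
    linarith
  have hNα : (0:ℝ) < (N:ℝ) + α := by linarith
  set m : ℝ := max (((N : ℝ) - 2) / (2 * N)) 0 with hmdef
  have hm0 : (0:ℝ) ≤ m := le_max_right _ _
  have hmhalf : m < 1/2 := by
    apply max_lt
    · rw [div_lt_div_iff₀ (by linarith) (by norm_num)]; linarith
    · norm_num
  set s : ℝ := ((N : ℝ) + α) / N with hsdef
  have hs1 : 1 < s := by rw [lt_div_iff₀ hN0]; linarith
  have hs2 : s < 2 := by rw [div_lt_iff₀ hN0]; linarith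
  have hs0 : 0 < s := by linarith
  have hsN : s * N = (N:ℝ) + α := by
    rw [hsdef]; field_simp
  have hm' : max (((N : ℝ) - 2) / (2 * ((N : ℝ) + α))) 0 = m / s := by
    rw [hmdef, ← max_div_div_right (le_of_lt hs0), zero_div]
    congr 1
    rw [hsdef]
    field_simp
  have hpq : 0 < p + q := by linarith
  have h2α : (0:ℝ) < 2 * α := by linarith
  have h2Nα : (0:ℝ) < 2 * ((N:ℝ) + α) := by linarith
  constructor
  · rintro ⟨θ1, θ2, hθ1, hθ2, h1, h2, h3, h4, h5⟩
    have hθ1' : 0 < θ1 := by linarith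
    have hθ2' : 0 < θ2 := by linarith
    obtain ⟨x, hxdef⟩ : ∃ x : ℝ, x = 1/θ1 := ⟨_, rfl⟩
    obtain ⟨y, hydef⟩ : ∃ y : ℝ, y = 1/θ2 := ⟨_, rfl⟩
    have hx0 : 0 < x := by rw [hxdef]; positivity
    have hy0 : 0 < y := by rw [hydef]; positivity
    have hx1 : x < 1 := by rw [hxdef, div_lt_one hθ1']; exact hθ1
    have hy1 : y < 1 := by rw [hydef, div_lt_one hθ2']; exact hθ2
    have e1 : 1 / (θ1 * p) = x / p := by rw [hxdef]; exact (div_div 1 θ1 p).symm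
    have e2 : 1 / (θ2 * q) = y / q := by rw [hydef]; exact (div_div 1 θ2 q).symm
    rw [e1] at h1 h2
    rw [e2] at h3 h4
    have hA : m * p < x := by rw [lt_div_iff₀ hp] at h1; linarith
    have hD : x * 2 < p := by
      rw [div_lt_div_iff₀ hp (by norm_num : (0:ℝ) < 2)] at h2; linarith
    have hA' : m * q < y := by rw [lt_div_iff₀ hq] at h3; linarith
    have hD' : y * 2 < q := by
      rw [div_lt_div_iff₀ hq (by norm_num : (0:ℝ) < 2)] at h4; linarith
    have hsum : x + y = s := by rw [hxdef, hydef, hsdef]; exact h5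
    refine ⟨?_, ?_, ?_, ?_, ?_, ?_⟩
    · rw [lt_div_iff₀ hp]; linarith
    · rw [div_lt_div_iff₀ hp h2α]
      nlinarith [mul_lt_mul_of_pos_left hD hN0,
        mul_lt_mul_of_pos_left (show s - 1 < x by linarith) hN0, hsN]
    · rw [lt_div_iff₀ hq]; linarith
    · rw [div_lt_div_iff₀ hq h2α]
      nlinarith [mul_lt_mul_of_pos_left hD' hN0,
        mul_lt_mul_of_pos_left (show s - 1 < y by linarith) hN0, hsN]
    · rw [hm', div_lt_div_iff₀ hs0 hpq]; nlinarith [hA, hA', hsum]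
    · rw [div_lt_div_iff₀ hpq h2Nα]
      nlinarith [mul_lt_mul_of_pos_left (show 2*s < p + q by linarith) hN0, hsN]
  · rintro ⟨c1, c2, c3, c4, c5, c6⟩
    rw [lt_div_iff₀ hp] at c1
    rw [div_lt_div_iff₀ hp h2α] at c2
    rw [lt_div_iff₀ hq] at c3
    rw [div_lt_div_iff₀ hq h2α] at c4
    rw [hm', div_lt_div_iff₀ hs0 hpq] at c5
    rw [div_lt_div_iff₀ hpq h2Nα] at c6
    -- c1 : m * p < 1, c2 : 1 * (2*α) < N * p, c3 : m * q < 1, c4 : 1 * (2*α) < N * q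
    -- c5 : m * (p+q) < 1 * s, c6 : 1 * (2*(N+α)) < N * (p+q)
    have c6' : 2 * s < p + q := by nlinarith
    have hex : max (max (m*p) (s-1)) (s - q/2) < min (min (p/2) 1) (s - m*q) := by
      simp only [max_lt_iff, lt_min_iff]
      have hα1 : α / (N:ℝ) < p / 2 := by
        rw [div_lt_div_iff₀ hN0 (by norm_num : (0:ℝ) < 2)]; linarith
      have hα2 : α / (N:ℝ) < q / 2 := by
        rw [div_lt_div_iff₀ hN0 (by norm_num : (0:ℝ) < 2)]; linarith
      have hsα : s = 1 + α / N := by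
        rw [hsdef]; field_simp
      refine ⟨⟨⟨⟨?_, ?_⟩, ?_⟩, ⟨?_, ?_⟩, ?_⟩, ⟨?_, ?_⟩, ?_⟩
      · nlinarith
      · linarith
      · nlinarith
      · linarith
      · linarith
      · linarith
      · linarith
      · linarith
      · nlinarith
    set L : ℝ := max (max (m*p) (s-1)) (s - q/2) with hL
    set R : ℝ := min (min (p/2) 1) (s - m*q) with hR
    set x : ℝ := (L + R) / 2 with hxdef
    have hLx : L < x := by rw [hxdef]; linarith
    have hxR : x < R := by rw [hxdef]; linarith
    rw [hL, max_lt_iff, max_lt_iff] at hLx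
    rw [hR, lt_min_iff, lt_min_iff] at hxR
    obtain ⟨⟨hA, hB⟩, hC⟩ := hLx
    obtain ⟨⟨hD, hE⟩, hF⟩ := hxR
    have hx0 : 0 < x := by linarith
    have hy0 : 0 < s - x := by linarith
    refine ⟨1/x, 1/(s-x), (one_lt_div hx0).mpr hE, (one_lt_div hy0).mpr (by linarith), ?_, ?_, ?_, ?_, ?_⟩
    · have e1 : 1 / (1/x * p) = x / p := by
        rw [← div_div, one_div_one_div]
      rw [e1, lt_div_iff₀ hp]; linarith
    · have e1 : 1 / (1/x * p) = x / p := by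
        rw [← div_div, one_div_one_div]
      rw [e1, div_lt_div_iff₀ hp (by norm_num : (0:ℝ) < 2)]; linarith
    · have e2 : 1 / (1/(s-x) * q) = (s-x) / q := by
        rw [← div_div, one_div_one_div]
      rw [e2, lt_div_iff₀ hq]; linarith
    · have e2 : 1 / (1/(s-x) * q) = (s-x) / q := by
        rw [← div_div, one_div_one_div]
      rw [e2, div_lt_div_iff₀ hq (by norm_num : (0:ℝ) < 2)]; linarith
    · rw [one_div_one_div, one_div_one_div]; ring
end

section
/- Let $H\subset\mathbb{R}^N$ be a closed half-space with reflection $\sigma_H$, and let $f,g:\mathbb{R}^N\to[0,\infty)$. For all $x,y\in H$ (so that $|x-y|\leq|x-\sigma_H(y)|$) and with $f^H,g^H$ the polarizations of $f,g$, the pointwise inequality holds: $\frac{f(x)g(y)+f(\sigma_H x)g(\sigma_H y)}{|x-y|^{N-\alpha}}+\frac{f(x)g(\sigma_H y)+f(\sigma_H x)g(y)}{|x-\sigma_H y|^{N-\alpha}}\leq\frac{f^H(x)g^H(y)+f^H(\sigma_H x)g^H(\sigma_H y)}{|x-y|^{N-\alpha}}+\frac{f^H(x)g^H(\sigma_H y)+f^H(\sigma_H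 x)g^H(y)}{|x-\sigma_H y|^{N-\alpha}}$, where $0<\alpha<N$ and $x\neq y$, $x\neq\sigma_H(y)$. -/
lemma swap_div_ineq (u v A B : ℝ) (huv : u ≤ v) (hA : 0 < A) (hAB : A ≤ B) :
    u / A + v / B ≤ v / A + u / B := by
  have hB : 0 < B := lt_of_lt_of_le hA hAB
  rw [div_add_div _ _ (ne_of_gt hA) (ne_of_gt hB),
    div_add_div _ _ (ne_of_gt hA) (ne_of_gt hB),
    div_le_div_iff₀ (by positivity) (by positivity)]
  have h := mul_nonneg (mul_nonneg (sub_nonneg.mpr hAB) (sub_nonneg.mpr huv))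
    (mul_nonneg hA.le hB.le)
  nlinarith [h]

lemma key_ineq (a b cc d A B : ℝ) (ha : 0 ≤ a) (hb : 0 ≤ b) (hc : 0 ≤ cc) (hd : 0 ≤ d)
    (hA : 0 < A) (hAB : A ≤ B) :
    (a * cc + b * d) / A + (a * d + b * cc) / B ≤
      (max a b * max cc d + min a b * min cc d) / A +
      (max a b * min cc d + min a b * max cc d) / B := by
  rcases le_total a b with h1 | h1 <;> rcases le_total cc d with h2 | h2
  · rw [max_eq_right h1, max_eq_right h2, min_eq_left h1, min_eq_left h2]
    apply le_of_eq; ring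
  · rw [max_eq_right h1, max_eq_left h2, min_eq_left h1, min_eq_right h2]
    have := swap_div_ineq (a * cc + b * d) (b * cc + a * d) A B
      (by nlinarith [mul_nonneg (sub_nonneg.mpr h1) (sub_nonneg.mpr h2)]) hA hAB
    ring_nf at this ⊢
    linarith
  · rw [max_eq_left h1, max_eq_right h2, min_eq_right h1, min_eq_left h2]
    have := swap_div_ineq (a * cc + b * d) (a * d + b * cc) A B
      (by nlinarith [mul_nonneg (sub_nonneg.mpr h1) (sub_nonneg.mpr h2)]) hA hAB
    ring_nf at this ⊢
    linarith
  · rw [max_eq_left h1, max_eq_left h2, min_eq_right h1, min_eq_right h2]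

/-- Reflection across the boundary hyperplane `{z : ⟪z, e⟫ = c}` of the closed
half-space `H = {z : ⟪z, e⟫ ≤ c}` (for a unit vector `e`). -/
noncomputable def halfSpaceRefl (N : ℕ) (e : EuclideanSpace ℝ (Fin N)) (c : ℝ)
    (z : EuclideanSpace ℝ (Fin N)) : EuclideanSpace ℝ (Fin N) :=
  z - (2 * ((inner ℝ z e : ℝ) - c)) • e

/-- Polarization of `u` with respect to the closed half-space
`H = {z : ⟪z, e⟫ ≤ c}`. -/
noncomputable def polarization (N : ℕ) (e : EuclideanSpace ℝ (Fin N)) (c : ℝ)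
    (u : EuclideanSpace ℝ (Fin N) → ℝ) (z : EuclideanSpace ℝ (Fin N)) : ℝ :=
  if (inner ℝ z e : ℝ) ≤ c then max (u z) (u (halfSpaceRefl N e c z))
  else min (u z) (u (halfSpaceRefl N e c z))


lemma inner_refl {N : ℕ} {e : EuclideanSpace ℝ (Fin N)} {c : ℝ} (he : ‖e‖ = 1)
    (z : EuclideanSpace ℝ (Fin N)) :
    (inner ℝ (halfSpaceRefl N e c z) e : ℝ) = 2 * c - inner ℝ z e := by
  have hee : (inner ℝ e e : ℝ) = 1 := by
    rw [real_inner_self_eq_norm_sq, he]; norm_num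
  rw [halfSpaceRefl, inner_sub_left, real_inner_smul_left, hee]
  ring

lemma refl_refl {N : ℕ} {e : EuclideanSpace ℝ (Fin N)} {c : ℝ} (he : ‖e‖ = 1)
    (z : EuclideanSpace ℝ (Fin N)) :
    halfSpaceRefl N e c (halfSpaceRefl N e c z) = z := by
  rw [halfSpaceRefl, inner_refl he, halfSpaceRefl, sub_sub, ← add_smul]
  have : 2 * ((inner ℝ z e : ℝ) - c) + 2 * (2 * c - (inner ℝ z e : ℝ) - c) = 0 := by ring
  rw [this, zero_smul, sub_zero]

lemma pol_in {N : ℕ} {e : EuclideanSpace ℝ (Fin N)} {c : ℝ}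
    (u : EuclideanSpace ℝ (Fin N) → ℝ) (z : EuclideanSpace ℝ (Fin N))
    (hz : (inner ℝ z e : ℝ) ≤ c) :
    polarization N e c u z = max (u z) (u (halfSpaceRefl N e c z)) := if_pos hz

lemma pol_out {N : ℕ} {e : EuclideanSpace ℝ (Fin N)} {c : ℝ} (he : ‖e‖ = 1)
    (u : EuclideanSpace ℝ (Fin N) → ℝ) (z : EuclideanSpace ℝ (Fin N))
    (hz : (inner ℝ z e : ℝ) ≤ c) :
    polarization N e c u (halfSpaceRefl N e c z) = min (u z) (u (halfSpaceRefl N e c z)) := by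
  rcases lt_or_eq_of_le hz with hz' | hz'
  · have h1 : ¬ ((inner ℝ (halfSpaceRefl N e c z) e : ℝ) ≤ c) := by
      rw [inner_refl he]; linarith
    rw [polarization, if_neg h1, refl_refl he, min_comm]
  · have h0 : halfSpaceRefl N e c z = z := by
      rw [halfSpaceRefl, hz', sub_self, mul_zero, zero_smul, sub_zero]
    rw [h0, polarization, if_pos hz, h0]
    simp

lemma dist_le {N : ℕ} {e : EuclideanSpace ℝ (Fin N)} {c : ℝ} (he : ‖e‖ = 1)
    (x y : EuclideanSpace ℝ (Fin N))
    (hx : (inner ℝ x e : ℝ) ≤ c) (hy : (inner ℝ y e : ℝ) ≤ c) :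
    ‖x - y‖ ≤ ‖x - halfSpaceRefl N e c y‖ := by
  set t : ℝ := 2 * ((inner ℝ y e : ℝ) - c) with ht
  have h1 : x - halfSpaceRefl N e c y = (x - y) + t • e := by
    rw [halfSpaceRefl]; abel
  have hsq : ‖x - halfSpaceRefl N e c y‖ ^ 2 =
      ‖x - y‖ ^ 2 + 2 * (t * ((inner ℝ x e : ℝ) - (inner ℝ y e : ℝ))) + t ^ 2 := by
    rw [h1, norm_add_sq_real, real_inner_smul_right, inner_sub_left,
      norm_smul, Real.norm_eq_abs, he, mul_one, sq_abs]
  have hkey : ‖x - y‖ ^ 2 ≤ ‖x - halfSpaceRefl N e c y‖ ^ 2 := by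
    rw [hsq]
    have : 2 * (t * ((inner ℝ x e : ℝ) - (inner ℝ y e : ℝ))) + t ^ 2
        = 2 * (t * ((inner ℝ x e : ℝ) - c)) := by rw [ht]; ring
    have hprod : 0 ≤ t * ((inner ℝ x e : ℝ) - c) := by
      have h1 : t ≤ 0 := by rw [ht]; linarith
      have h2 : (inner ℝ x e : ℝ) - c ≤ 0 := by linarith
      nlinarith
    linarith
  nlinarith [norm_nonneg (x - y), norm_nonneg (x - halfSpaceRefl N e c y)]



/-- The pointwise polarization inequality for the Riesz kernel: for `x, y` in
the closed half-space `H`, with `σ = σ_H` the reflection and `f^H, g^H` the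
polarizations of the nonnegative functions `f, g`. -/

theorem stmt_10 (N : ℕ) (hN : 1 ≤ N) (α : ℝ) (h0 : 0 < α) (hα : α < N)
    (e : EuclideanSpace ℝ (Fin N)) (c : ℝ) (he : ‖e‖ = 1)
    (f g : EuclideanSpace ℝ (Fin N) → ℝ)
    (hf : ∀ z, 0 ≤ f z) (hg : ∀ z, 0 ≤ g z)
    (x y : EuclideanSpace ℝ (Fin N))
    (hx : (inner ℝ x e : ℝ) ≤ c) (hy : (inner ℝ y e : ℝ) ≤ c)
    (hxy : x ≠ y) (hxσy : x ≠ halfSpaceRefl N e c y) :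
    (f x * g y + f (halfSpaceRefl N e c x) * g (halfSpaceRefl N e c y)) /
        ‖x - y‖ ^ ((N : ℝ) - α) +
      (f x * g (halfSpaceRefl N e c y) + f (halfSpaceRefl N e c x) * g y) /
        ‖x - halfSpaceRefl N e c y‖ ^ ((N : ℝ) - α) ≤
    (polarization N e c f x * polarization N e c g y +
        polarization N e c f (halfSpaceRefl N e c x) *
          polarization N e c g (halfSpaceRefl N e c y)) /
        ‖x - y‖ ^ ((N : ℝ) - α) +
      (polarization N e c f x *
          polarization N e c g (halfSpaceRefl N e c y) +
        polarization N e c f (halfSpaceRefl N e c x) * polarization N e c g y) /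
        ‖x - halfSpaceRefl N e c y‖ ^ ((N : ℝ) - α) := by
  have hn1 : (0:ℝ) < ‖x - y‖ := by
    rw [norm_pos_iff]; exact sub_ne_zero.mpr hxy
  have hn2 : (0:ℝ) < ‖x - halfSpaceRefl N e c y‖ := by
    rw [norm_pos_iff]; exact sub_ne_zero.mpr hxσy
  have hexp : (0:ℝ) ≤ (N:ℝ) - α := by linarith
  have hA : (0:ℝ) < ‖x - y‖ ^ ((N : ℝ) - α) := Real.rpow_pos_of_pos hn1 _
  have hAB : ‖x - y‖ ^ ((N : ℝ) - α) ≤ ‖x - halfSpaceRefl N e c y‖ ^ ((N : ℝ) - α) :=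
    Real.rpow_le_rpow hn1.le (dist_le he x y hx hy) hexp
  rw [pol_in f x hx, pol_in g y hy, pol_out he f x hx, pol_out he g y hy]
  exact key_ineq _ _ _ _ _ _ (hf x) (hf _) (hg y) (hg _) hA hAB
end

section
/- (Pohozaev identity consequence / non-existence) Let $N\geq1$, $\alpha\in(0,N)$, $p,q>1$. Suppose $(u,v)$ is a weak solution of the Hartree system $-\Delta u+u=\frac{2p}{p+q}(I_\alpha*|v|^q)|u|^{p-2}u$, $-\Delta v+v=\frac{2q}{p+q}(I_\alpha*|u|^p)|v|^{q-2}v$ with the regularity $u\in H^1\cap W^{2,2}_{loc}\cap W^{1,\theta_1 p}$, $v\in H^1\cap W^{2,2}_{loc}\cap W^{1,\theta_2 q}$ for some $\theta_1,\theta_2>1$ with $\frac{1}{\theta_1}+\frac{1}{\theta_2}=\frac{N+\alpha}{N}$, and suppose the Pohozaev identity $\frac{N-2}{2}\int(|\nabla u|^2+|\nabla v|^2)+\frac{N}{2}\int(u^2+v^2)=\frac{2(N+\alpha)}{p+q}\int(I_\alpha*|u|^p)|v|^q$ holds together with the Nehari identity $\int(|\nabla u|^2+u^2+|\nabla v|^2+v^2)=2\int(I_\alpha*|u|^p)|v|^q$.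 If $(p+q)N\leq2(N+\alpha)$ or $(p+q)(N-2)\geq2(N+\alpha)$, then $u=0$ and $v=0$ a.e. -/
open MeasureTheory

lemma line_avoid {N : ℕ} {S : Set (EuclideanSpace ℝ (Fin N))}
    (hSm : MeasurableSet S) (hS : volume S = 0) (d : EuclideanSpace ℝ (Fin N)) :
    ∀ᵐ x : EuclideanSpace ℝ (Fin N), ∀ᵐ t : ℝ, x + t • d ∉ S := by
  set T : Set (EuclideanSpace ℝ (Fin N) × ℝ) := {p | p.1 + p.2 • d ∈ S} with hTdef
  have hmeas : Measurable fun p : EuclideanSpace ℝ (Fin N) × ℝ => p.1 + p.2 • d :=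
    (continuous_fst.add (continuous_snd.smul continuous_const)).measurable
  have hTm : MeasurableSet T := hmeas hSm
  have hT : (volume.prod volume) T = 0 := by
    rw [Measure.prod_apply_symm hTm]
    have h1 : ∀ t : ℝ, volume ((fun x : EuclideanSpace ℝ (Fin N) => (x, t)) ⁻¹' T) = 0 := by
      intro t
      have h2 : ((fun x : EuclideanSpace ℝ (Fin N) => (x, t)) ⁻¹' T)
          = (fun x => x + t • d) ⁻¹' S := rfl
      rw [h2, measure_preimage_add_right volume (t • d) S]
      exact hS
    simp [h1]
  have h3 := (Measure.measure_prod_null hTm).1 hT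
  filter_upwards [h3] with x hx
  have hx' : volume (Prod.mk x ⁻¹' T) = 0 := hx
  exact (measure_eq_zero_iff_ae_notMem).1 hx'

lemma const_line {N : ℕ} {u : EuclideanSpace ℝ (Fin N) → ℝ}
    (hud : Differentiable ℝ u) (x d : EuclideanSpace ℝ (Fin N))
    (hline : ∀ᵐ t : ℝ, fderiv ℝ u (x + t • d) = 0) (s : ℝ) :
    u (x + s • d) = u x := by
  set g : ℝ → ℝ := fun t => u (x + t • d) with hg
  set g' : ℝ → ℝ := fun t => fderiv ℝ u (x + t • d) d with hg'
  have hder : ∀ t : ℝ, HasDerivAt g (g' t) t := by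
    intro t
    have hl : HasDerivAt (fun t : ℝ => x + t • d) d t := by
      simpa using ((hasDerivAt_id t).smul_const d).const_add x
    exact (hud (x + t • d)).hasFDerivAt.comp_hasDerivAt t hl
  have hzero : g' =ᵐ[volume] 0 := by
    filter_upwards [hline] with t ht
    simp [hg', ht]
  have hint : IntervalIntegrable g' volume 0 s :=
    (intervalIntegrable_const (c := (0:ℝ))).congr_ae (Filter.EventuallyEq.symm (ae_restrict_of_ae hzero))
  have h1 : ∫ t in (0:ℝ)..s, g' t = g s - g 0 :=
    intervalIntegral.integral_eq_sub_of_hasDerivAt (fun t _ => hder t) hint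
  have h2 : ∫ t in (0:ℝ)..s, g' t = 0 := by
    rw [intervalIntegral.integral_congr_ae (hzero.mono fun t ht _ => ht)]
    simp
  have : g s = g 0 := by rw [h2] at h1; linarith
  simpa [hg] using this

lemma zero_of_ae_fderiv_zero {N : ℕ} (hN : 1 ≤ N) {u : EuclideanSpace ℝ (Fin N) → ℝ}
    (hud : Differentiable ℝ u) (hu2 : MemLp u 2 volume)
    (hae : ∀ᵐ x : EuclideanSpace ℝ (Fin N), fderiv ℝ u x = 0) :
    u =ᵐ[(volume : Measure (EuclideanSpace ℝ (Fin N)))] 0 := by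
  classical
  set S : Set (EuclideanSpace ℝ (Fin N)) := {x | fderiv ℝ u x ≠ 0} with hSdef
  have hSm : MeasurableSet S := by
    have : Measurable (fderiv ℝ u) := measurable_fderiv ℝ u
    exact (this (measurableSet_singleton 0)).compl
  have hS : volume S = 0 := by
    rw [measure_eq_zero_iff_ae_notMem]
    filter_upwards [hae] with x hx
    simp [hSdef, hx]
  -- countable dense set
  obtain ⟨D, hDc, hDd⟩ := TopologicalSpace.exists_countable_dense (EuclideanSpace ℝ (Fin N))
  have hgood : ∀ᵐ x : EuclideanSpace ℝ (Fin N), ∀ d ∈ D, ∀ᵐ t : ℝ, x + t • d ∉ S :=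
    (ae_ball_iff hDc).2 fun d _ => line_avoid hSm hS d
  -- the good set is nonempty since volume ≠ 0
  haveI : Nonempty (Fin N) := ⟨⟨0, hN⟩⟩
  haveI : Nontrivial (EuclideanSpace ℝ (Fin N)) := by
    refine ⟨0, EuclideanSpace.single ⟨0, hN⟩ 1, fun h => ?_⟩
    have := congrArg (fun z : EuclideanSpace ℝ (Fin N) => z ⟨0, hN⟩) h
    simp [EuclideanSpace.single] at this
  have hvol : (volume : Measure (EuclideanSpace ℝ (Fin N))) Set.univ = ⊤ :=
    measure_univ_of_isAddLeftInvariant volume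
  haveI : (ae (volume : Measure (EuclideanSpace ℝ (Fin N)))).NeBot := by
    refine ae_neBot.2 fun h => ?_
    rw [h] at hvol; simp at hvol
  obtain ⟨x₀, hx₀⟩ := hgood.exists
  -- u is constant along all lines x₀ + t • d for d ∈ D
  have hconst : ∀ d ∈ D, u (x₀ + d) = u x₀ := by
    intro d hd
    have hline : ∀ᵐ t : ℝ, fderiv ℝ u (x₀ + t • d) = 0 := by
      filter_upwards [hx₀ d hd] with t ht
      by_contra h
      exact ht h
    simpa using const_line hud x₀ d hline 1
  -- by density and continuity, u is constant
  have huc : ∀ y, u y = u x₀ := by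
    intro y
    obtain ⟨seq, hseqD, hseqlim⟩ := mem_closure_iff_seq_limit.1 (hDd (y - x₀))
    have hlim : Filter.Tendsto (fun n => x₀ + seq n) Filter.atTop (nhds y) := by
      have := hseqlim.const_add x₀
      simpa using this
    have h2 : Filter.Tendsto (fun n => u (x₀ + seq n)) Filter.atTop (nhds (u y)) :=
      (hud.continuous.continuousAt.tendsto).comp hlim
    have h3 : ∀ n, u (x₀ + seq n) = u x₀ := fun n => hconst _ (hseqD n)
    simp only [h3] at h2
    exact (tendsto_const_nhds_iff.1 h2).symm
  -- constant L² function on infinite measure space is zero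
  have hint : Integrable (fun _ : EuclideanSpace ℝ (Fin N) => (u x₀)^2) volume := by
    have := hu2.integrable_sq
    refine this.congr ?_
    filter_upwards with x
    rw [huc x]
  rcases integrable_const_iff.1 hint with h | h
  · have : u x₀ = 0 := by nlinarith [sq_nonneg (u x₀)]
    filter_upwards with x
    simp [huc x, this]
  · exact absurd hvol (measure_ne_top _ _)

lemma sq_add_sq_eq_zero' {a b : ℝ} (h : a ^ 2 + b ^ 2 = 0) : a = 0 ∧ b = 0 := by
  constructor <;> [skip; skip] <;>
  · have h1 := sq_nonneg a
    have h2 := sq_nonneg b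
    first
    | exact pow_eq_zero_iff (n := 2) (by norm_num) |>.1 (by linarith)
    | exact pow_eq_zero_iff (n := 2) (by norm_num) |>.1 (by linarith)


/-- Non-existence via the Pohozaev identity: if `(u, v)` is a (regular enough)
weak solution of the Hartree system whose nonlocal energy is `T`, satisfying
the Pohozaev and Nehari identities, and `(p+q)N ≤ 2(N+α)` or
`(p+q)(N-2) ≥ 2(N+α)`, then `u = v = 0` a.e. -/
theorem stmt_13 (N : ℕ) (hN : 1 ≤ N) (α p q θ1 θ2 T : ℝ)
    (h0 : 0 < α) (hα : α < N) (hp : 1 < p) (hq : 1 < q)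
    (hθ1 : 1 < θ1) (hθ2 : 1 < θ2)
    (hsum : 1 / θ1 + 1 / θ2 = ((N : ℝ) + α) / N)
    (u v : EuclideanSpace ℝ (Fin N) → ℝ)
    (hud : Differentiable ℝ u) (hvd : Differentiable ℝ v)
    (hu2 : MemLp u 2 volume) (hv2 : MemLp v 2 volume)
    (hgradInt : Integrable
      (fun x => ‖fderiv ℝ u x‖ ^ (2 : ℕ) + ‖fderiv ℝ v x‖ ^ (2 : ℕ)) volume)
    (hPoho : (((N : ℝ) - 2) / 2) *
        (∫ x, ‖fderiv ℝ u x‖ ^ (2 : ℕ) + ‖fderiv ℝ v x‖ ^ (2 : ℕ)) +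
      ((N : ℝ) / 2) * (∫ x, (u x) ^ (2 : ℕ) + (v x) ^ (2 : ℕ)) =
        (2 * ((N : ℝ) + α) / (p + q)) * T)
    (hNehari : (∫ x, ‖fderiv ℝ u x‖ ^ (2 : ℕ) + ‖fderiv ℝ v x‖ ^ (2 : ℕ)) +
        (∫ x, (u x) ^ (2 : ℕ) + (v x) ^ (2 : ℕ)) = 2 * T)
    (hcase : (p + q) * N ≤ 2 * ((N : ℝ) + α) ∨
      2 * ((N : ℝ) + α) ≤ (p + q) * ((N : ℝ) - 2)) :
    u =ᵐ[(volume : Measure (EuclideanSpace ℝ (Fin N)))] 0 ∧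
    v =ᵐ[(volume : Measure (EuclideanSpace ℝ (Fin N)))] 0 := by
  set A := ∫ x, ‖fderiv ℝ u x‖ ^ (2 : ℕ) + ‖fderiv ℝ v x‖ ^ (2 : ℕ) with hAdef
  set B := ∫ x, (u x) ^ (2 : ℕ) + (v x) ^ (2 : ℕ) with hBdef
  have hA0 : 0 ≤ A := integral_nonneg fun x => by positivity
  have hB0 : 0 ≤ B := integral_nonneg fun x => by positivity
  have hpq : 0 < p + q := by linarith
  have key : (p + q) * (((N:ℝ)-2)/2) * A + (p + q) * ((N:ℝ)/2) * B
      = ((N:ℝ)+α) * (A+B) := by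
    have h2T : 2 * T = A + B := hNehari.symm
    have := hPoho
    field_simp at this
    nlinarith [this, h2T]
  have hBint : Integrable (fun x => (u x) ^ (2:ℕ) + (v x) ^ (2:ℕ)) volume :=
    hu2.integrable_sq.add hv2.integrable_sq
  have hdisj : B = 0 ∨ A = 0 := by
    rcases hcase with h | h
    · right; nlinarith
    · left
      have hNpos : (0:ℝ) < N := by exact_mod_cast Nat.lt_of_lt_of_le Nat.zero_lt_one hN
      nlinarith
  rcases hdisj with hBz | hAz
  · -- B = 0 : u² + v² = 0 a.e.
    have hae : (fun x => (u x) ^ (2:ℕ) + (v x) ^ (2:ℕ)) =ᵐ[volume] 0 :=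
      (integral_eq_zero_iff_of_nonneg (fun x => by positivity) hBint).1
        (by rw [← hBdef]; exact hBz)
    constructor
    · filter_upwards [hae] with x hx
      exact (sq_add_sq_eq_zero' hx).1
    · filter_upwards [hae] with x hx
      exact (sq_add_sq_eq_zero' hx).2
  · -- A = 0 : fderiv u = fderiv v = 0 a.e.
    have hae : (fun x => ‖fderiv ℝ u x‖ ^ (2:ℕ) + ‖fderiv ℝ v x‖ ^ (2:ℕ)) =ᵐ[volume] 0 :=
      (integral_eq_zero_iff_of_nonneg (fun x => by positivity) hgradInt).1
        (by rw [← hAdef]; exact hAz)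
    have hufd : ∀ᵐ x : EuclideanSpace ℝ (Fin N), fderiv ℝ u x = 0 := by
      filter_upwards [hae] with x hx
      exact norm_eq_zero.1 (sq_add_sq_eq_zero' hx).1
    have hvfd : ∀ᵐ x : EuclideanSpace ℝ (Fin N), fderiv ℝ v x = 0 := by
      filter_upwards [hae] with x hx
      exact norm_eq_zero.1 (sq_add_sq_eq_zero' hx).2
    exact ⟨zero_of_ae_fderiv_zero hN hud hu2 hufd, zero_of_ae_fderiv_zero hN hvd hv2 hvfd⟩
end
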